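/- If f : ℝ/ℤ → ℝ is continuous with mean zero, absolutely convergent Fourier series, and f̂(k) ≥ c k^{-2} for all k ≠ 0 with c > 0, then for any points x_1, ..., x_N with sum_{m,n=1}^N f({x_m - x_n}) ≤ N f(0), one has sum_{k≠0} k^{-2} |N^{-1} sum_{m=1}^N e^{2πik x_m}|² ≤ f(0)/(cN). -/

import Mathlib

open scoped Real ComplexOrder

open Complex Finset

theorem weyl_sum_bound (f : ℝ → ℝ) (hper : Function.Periodic f 1)
    (hcont : Continuous f) (hmean : ∫ x in (0 : ℝ)..1, f x = 0)
    (habs : Summable fun k : ℤ =>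
      ‖∫ t in (0 : ℝ)..1, (f t : ℂ) * Complex.exp (-(2 * π * Complex.I * k * t))‖)
    (c : ℝ) (hc : 0 < c)
    (hfourier : ∀ k : ℤ, k ≠ 0 →
      (c / (k : ℂ) ^ 2 : ℂ)
        ≤ ∫ t in (0 : ℝ)..1, (f t : ℂ) * Complex.exp (-(2 * π * Complex.I * k * t)))
    (N : ℕ) (hN : 1 ≤ N) (x : ℕ → ℝ)
    (henergy : ∑ m ∈ Finset.range N, ∑ n ∈ Finset.range N, f (Int.fract (x m - x n))
      ≤ (N : ℝ) * f 0) :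
    ∑' k : {k : ℤ // k ≠ 0},
        (1 : ℝ) / ((k : ℤ) : ℝ) ^ 2
          * ‖(1 : ℂ) / N * ∑ m ∈ Finset.range N, Complex.exp (2 * π * Complex.I * (k : ℤ) * x m)‖ ^ 2
      ≤ f 0 / (c * N) := by
  haveI : Fact ((0:ℝ) < 1) := ⟨one_pos⟩
  have hperc : Function.Periodic (fun t : ℝ => (f t : ℂ)) 1 := fun t => by
    simp [hper t]
  have hcl : Continuous hperc.lift := by
    rw [isQuotientMap_quotient_mk'.continuous_iff]
    exact Complex.continuous_ofReal.comp hcont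
  set F : C(AddCircle (1:ℝ), ℂ) := ⟨hperc.lift, hcl⟩ with hFdef
  have hFcoe : ∀ t : ℝ, F ((t : ℝ) : AddCircle (1:ℝ)) = (f t : ℂ) := fun t => rfl
  -- Fourier coefficients
  have ha : ∀ k : ℤ, fourierCoeff F k
      = ∫ t in (0:ℝ)..1, (f t : ℂ) * Complex.exp (-(2 * π * Complex.I * k * t)) := by
    intro k
    rw [fourierCoeff_eq_intervalIntegral F k 0, one_div_one, one_smul, zero_add]
    apply intervalIntegral.integral_congr
    intro t _
    dsimp only
    rw [smul_eq_mul, fourier_coe_apply, hFcoe, mul_comm]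
    congr 1
    push_cast
    ring
  have hsum : Summable (fourierCoeff (F : AddCircle (1:ℝ) → ℂ)) := by
    apply Summable.of_norm
    simpa only [ha] using habs
  -- pointwise Fourier inversion
  have key : ∀ y : ℝ, HasSum
      (fun k : ℤ => fourierCoeff (F : AddCircle (1:ℝ) → ℂ) k
        * Complex.exp (2 * π * Complex.I * k * y)) ((f y : ℂ)) := by
    intro y
    have h := has_pointwise_sum_fourier_series_of_summable hsum ((y : ℝ) : AddCircle (1:ℝ))
    rw [hFcoe] at h
    refine HasSum.congr_fun h fun k => ?_
    rw [smul_eq_mul, fourier_coe_apply]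
    congr 1
    push_cast
    ring
  set S : ℤ → ℂ := fun k => ∑ m ∈ Finset.range N, Complex.exp (2 * π * Complex.I * k * x m)
    with hSdef
  set E : ℝ := ∑ m ∈ Finset.range N, ∑ n ∈ Finset.range N, f (x m - x n) with hEdef
  set a : ℤ → ℂ := fourierCoeff (F : AddCircle (1:ℝ) → ℂ) with hadef
  have hdsum : HasSum (fun k : ℤ => a k * (S k * (starRingEnd ℂ) (S k))) ((E : ℂ)) := by
    have h2 : HasSum
        (fun k : ℤ => ∑ m ∈ Finset.range N, ∑ n ∈ Finset.range N,
          a k * Complex.exp (2 * π * Complex.I * k * ((x m - x n : ℝ) : ℂ)))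
        (∑ m ∈ Finset.range N, ∑ n ∈ Finset.range N, ((f (x m - x n) : ℂ))) :=
      hasSum_sum fun m _ => hasSum_sum fun n _ => key (x m - x n)
    have h3 : ∀ k : ℤ, (∑ m ∈ Finset.range N, ∑ n ∈ Finset.range N,
        a k * Complex.exp (2 * π * Complex.I * k * ((x m - x n : ℝ) : ℂ)))
        = a k * (S k * (starRingEnd ℂ) (S k)) := by
      intro k
      have hS : S k * (starRingEnd ℂ) (S k) = ∑ m ∈ Finset.range N, ∑ n ∈ Finset.range N,
          Complex.exp (2 * π * Complex.I * k * ((x m - x n : ℝ) : ℂ)) := by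
        rw [hSdef, map_sum, Finset.sum_mul_sum]
        refine Finset.sum_congr rfl fun m _ => Finset.sum_congr rfl fun n _ => ?_
        rw [← Complex.exp_conj, ← Complex.exp_add]
        congr 1
        simp only [map_mul, map_ofNat, Complex.conj_ofReal, Complex.conj_I, map_intCast]
        push_cast
        ring
      rw [hS, Finset.mul_sum]
      exact Finset.sum_congr rfl fun m _ => (Finset.mul_sum _ _ _).symm
    have h4 : ((E : ℂ)) = ∑ m ∈ Finset.range N, ∑ n ∈ Finset.range N,
        ((f (x m - x n) : ℂ)) := by
      rw [hEdef]; push_cast; rfl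
    rw [h4]
    exact HasSum.congr_fun h2 fun k => (h3 k).symm
  -- real parts
  have hre : HasSum (fun k : ℤ => (a k).re * Complex.normSq (S k)) E := by
    have h := Complex.hasSum_re hdsum
    rw [Complex.ofReal_re] at h
    refine HasSum.congr_fun h fun k => ?_
    rw [Complex.mul_conj]
    simp [Complex.mul_re]
  -- a 0 = 0
  have ha0 : (a 0).re = 0 := by
    have : a 0 = ((∫ t in (0:ℝ)..1, f t : ℝ) : ℂ) := by
      rw [ha 0]
      rw [← intervalIntegral.integral_ofReal]
      apply intervalIntegral.integral_congr
      intro t _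
      simp
    rw [this, hmean]
    simp
  -- real lower bounds on coefficients
  have hak : ∀ k : ℤ, k ≠ 0 → c / (k : ℝ) ^ 2 ≤ (a k).re := by
    intro k hk
    have h := hfourier k hk
    rw [← ha k] at h
    rw [Complex.le_def] at h
    have : ((c : ℂ) / (k : ℂ) ^ 2).re = c / (k : ℝ) ^ 2 := by
      have : ((c : ℂ) / (k : ℂ) ^ 2) = ((c / (k : ℝ) ^ 2 : ℝ) : ℂ) := by push_cast; ring
      rw [this, Complex.ofReal_re]
    rw [this] at h
    exact h.1
  -- the comparison series
  set L : ℤ → ℝ := fun k => if k = 0 then 0 else c / (k : ℝ) ^ 2 * Complex.normSq (S k)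
    with hLdef
  have hL_nonneg : ∀ k : ℤ, 0 ≤ L k := by
    intro k
    rw [hLdef]
    by_cases hk : k = 0
    · simp [hk]
    · simp only [hk, if_false]
      apply mul_nonneg _ (Complex.normSq_nonneg _)
      positivity
  have hL_le : ∀ k : ℤ, L k ≤ (a k).re * Complex.normSq (S k) := by
    intro k
    rw [hLdef]
    by_cases hk : k = 0
    · simp [hk, ha0]
    · simp only [hk, if_false]
      exact mul_le_mul_of_nonneg_right (hak k hk) (Complex.normSq_nonneg _)
  have hLsum : Summable L := by
    refine Summable.of_norm_bounded hre.summable fun k => ?_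
    rw [Real.norm_eq_abs, _root_.abs_of_nonneg (hL_nonneg k)]
    exact hL_le k
  have hE_le : E ≤ (N : ℝ) * f 0 := by
    rw [hEdef]
    refine le_trans (le_of_eq ?_) henergy
    refine Finset.sum_congr rfl fun m _ => Finset.sum_congr rfl fun n _ => ?_
    rw [Int.fract]
    have := hper.sub_int_mul_eq (x := x m - x n) ⌊x m - x n⌋
    rw [mul_one] at this
    rw [this]
  have htsum_le : ∑' k : ℤ, L k ≤ (N : ℝ) * f 0 :=
    le_trans (Summable.tsum_le_tsum hL_le hLsum hre.summable) (le_trans (le_of_eq hre.tsum_eq) hE_le)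
  -- restrict to nonzero k
  have hsub : ∑' k : {k : ℤ // k ≠ 0}, L k = ∑' k : ℤ, L k := by
    apply tsum_subtype_eq_of_support_subset
    intro k hk
    simp only [Function.mem_support, hLdef] at hk
    intro h0
    exact hk (by simp [h0])
  -- identify target sum
  have hterm : ∀ k : {k : ℤ // k ≠ 0},
      (1 : ℝ) / ((k : ℤ) : ℝ) ^ 2 * ‖(1 : ℂ) / N * S k‖ ^ 2
        = (1 / (c * (N : ℝ) ^ 2)) * L k := by
    intro ⟨k, hk⟩
    simp only [hLdef, hk, if_false]
    rw [norm_mul, mul_pow, ← Complex.normSq_eq_norm_sq (S k)]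
    have hnorm : ‖(1 : ℂ) / (N : ℂ)‖ = 1 / (N : ℝ) := by
      rw [norm_div, norm_one, Complex.norm_natCast]
    rw [hnorm]
    have hk' : ((k : ℤ) : ℝ) ≠ 0 := Int.cast_ne_zero.mpr hk
    have hN' : (N : ℝ) ≠ 0 := Nat.cast_ne_zero.mpr (by omega)
    field_simp
  calc ∑' k : {k : ℤ // k ≠ 0}, (1 : ℝ) / ((k : ℤ) : ℝ) ^ 2
          * ‖(1 : ℂ) / N * ∑ m ∈ Finset.range N, Complex.exp (2 * π * Complex.I * (k : ℤ) * x m)‖ ^ 2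
      = ∑' k : {k : ℤ // k ≠ 0}, (1 / (c * (N : ℝ) ^ 2)) * L k := by
        exact tsum_congr hterm
    _ = (1 / (c * (N : ℝ) ^ 2)) * ∑' k : {k : ℤ // k ≠ 0}, L k := tsum_mul_left
    _ ≤ (1 / (c * (N : ℝ) ^ 2)) * ((N : ℝ) * f 0) := by
        apply mul_le_mul_of_nonneg_left _ (by positivity)
        rw [hsub]
        exact htsum_le
    _ = f 0 / (c * N) := by
        have hN' : (N : ℝ) ≠ 0 := Nat.cast_ne_zero.mpr (by omega)
        field_simp
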